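/- Let G be a connected linear algebraic group over an algebraically closed field and H a closed subgroup of G, with H acting on G by right translations. Then for each rational character ω of H and each g ∈ G, there exists an H-invariant open neighbourhood U of g in G such that the space 𝒪_ω(U) of regular functions f on U satisfying f(xh) = ω(h)f(x) for all h ∈ H, x ∈ U, is nonzero. -/

import Mathlib

open Matrix MvPolynomial Pointwise

noncomputable section

namespace AlgGrp

variable {E : Type*} [Field E] {n : ℕ}

/-! ### The Zariski topology on `GL n E`

We realise `GL n E` as a closed subvariety of affine `n² + 1`-space via the matrix
entries together with the inverse of the determinant, and endow it with the Zariski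
topology generated by the basic open sets of polynomials in these coordinates. -/

/-- The affine coordinates of an element of `GL n E`: matrix entries and `det⁻¹`. -/
def glCoordFun (g : GL (Fin n) E) : (Fin n × Fin n) ⊕ Unit → E :=
  Sum.elim (fun ij => (g : Matrix (Fin n) (Fin n) E) ij.1 ij.2)
    fun _ => Ring.inverse ((g : Matrix (Fin n) (Fin n) E).det)

/-- Evaluation of a polynomial in the natural coordinates of `GL n E`. -/
def glEval (p : MvPolynomial ((Fin n × Fin n) ⊕ Unit) E) (g : GL (Fin n) E) : E :=
  MvPolynomial.eval (glCoordFun g) p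

/-- The Zariski topology on `GL n E`. -/
instance glZariski : TopologicalSpace (GL (Fin n) E) :=
  TopologicalSpace.generateFrom
    {U | ∃ p : MvPolynomial ((Fin n × Fin n) ⊕ Unit) E, U = {g | glEval p g ≠ 0}}

/-! ### Linear algebraic groups as Zariski-closed subgroups of `GL n E` -/

/-- A subgroup of `GL n E` is an algebraic (i.e. closed) subgroup if its carrier is
Zariski-closed. -/
def IsClosedSubgroup (H : Subgroup (GL (Fin n) E)) : Prop :=
  IsClosed (H : Set (GL (Fin n) E))

/-- A connected linear algebraic group, realised as a Zariski-closed connected subgroup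
of some `GL n E`. -/
def IsConnectedLinearAlgGrp (G : Subgroup (GL (Fin n) E)) : Prop :=
  IsClosedSubgroup G ∧ IsConnected (G : Set (GL (Fin n) E))

/-- An element of `GL n E` is unipotent if `g - 1` is nilpotent. -/
def IsUnipotentElt (g : GL (Fin n) E) : Prop :=
  ((g : Matrix (Fin n) (Fin n) E) - 1) ^ n = 0

/-- An element of `GL n E` is semisimple if it is diagonalisable (the field being
algebraically closed). -/
def IsSemisimpleElt (g : GL (Fin n) E) : Prop :=
  ∃ (u : GL (Fin n) E) (d : Fin n → E),
    (g : Matrix (Fin n) (Fin n) E) =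
      (u : Matrix (Fin n) (Fin n) E) * Matrix.diagonal d *
        ((u⁻¹ : GL (Fin n) E) : Matrix (Fin n) (Fin n) E)

/-- `H` is normalised by `G`. -/
def IsNormalIn (G H : Subgroup (GL (Fin n) E)) : Prop :=
  ∀ g ∈ G, ∀ h ∈ H, g * h * g⁻¹ ∈ H

/-- A subgroup all of whose elements are unipotent. -/
def IsUnipotentSubgroup (H : Subgroup (GL (Fin n) E)) : Prop :=
  ∀ h ∈ H, IsUnipotentElt h

/-- A linear algebraic group is reductive if its unipotent radical is trivial, i.e.
every closed connected normal subgroup consisting of unipotent elements is trivial. -/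
def IsReductive (G : Subgroup (GL (Fin n) E)) : Prop :=
  ∀ H : Subgroup (GL (Fin n) E), H ≤ G → IsClosedSubgroup H →
    IsConnected (H : Set (GL (Fin n) E)) → IsNormalIn G H → IsUnipotentSubgroup H → H = ⊥

/-- A Borel subgroup of `G`: a maximal closed connected solvable subgroup. -/
def IsBorelIn (G B : Subgroup (GL (Fin n) E)) : Prop :=
  B ≤ G ∧ IsClosedSubgroup B ∧ IsConnected (B : Set (GL (Fin n) E)) ∧ IsSolvable B ∧
    ∀ B' : Subgroup (GL (Fin n) E), B' ≤ G → IsClosedSubgroup B' →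
      IsConnected (B' : Set (GL (Fin n) E)) → IsSolvable B' → B ≤ B' → B' = B

/-- A parabolic subgroup of `G`: a closed subgroup containing a Borel subgroup of `G`. -/
def IsParabolicIn (G P : Subgroup (GL (Fin n) E)) : Prop :=
  P ≤ G ∧ IsClosedSubgroup P ∧ ∃ B, IsBorelIn G B ∧ B ≤ P

/-- `N` is the unipotent radical of `P`: the largest closed connected normal subgroup of
`P` consisting of unipotent elements. -/
def IsUnipotentRadicalOf (P N : Subgroup (GL (Fin n) E)) : Prop :=
  N ≤ P ∧ IsClosedSubgroup N ∧ IsConnected (N : Set (GL (Fin n) E)) ∧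
    IsUnipotentSubgroup N ∧ IsNormalIn P N ∧
    ∀ N' : Subgroup (GL (Fin n) E), N' ≤ P → IsClosedSubgroup N' →
      IsConnected (N' : Set (GL (Fin n) E)) → IsUnipotentSubgroup N' → IsNormalIn P N' → N' ≤ N

/-- `M` is a Levi component of a parabolic subgroup `P` with unipotent radical `N`:
a closed connected complement to `N` in `P`. -/
def IsLeviComponentOf (P N M : Subgroup (GL (Fin n) E)) : Prop :=
  M ≤ P ∧ IsClosedSubgroup M ∧ IsConnected (M : Set (GL (Fin n) E)) ∧
    M ⊓ N = ⊥ ∧ ∀ p ∈ P, ∃ m ∈ M, ∃ u ∈ N, p = m * u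

/-- `C` is a conjugacy class of the subgroup `H`. -/
def IsConjClassIn (H : Subgroup (GL (Fin n) E)) (C : Set (GL (Fin n) E)) : Prop :=
  ∃ μ ∈ H, C = {x | ∃ h ∈ H, x = h * μ * h⁻¹}

/-- `tC` is the conjugacy class of `G` induced from the conjugacy class `C` of a Levi
component via a parabolic subgroup with unipotent radical `N`: the conjugacy class of `G`
whose intersection with `C * N` is open and dense in `C * N`. -/
def IsInducedClassVia (G N : Subgroup (GL (Fin n) E)) (C tC : Set (GL (Fin n) E)) : Prop :=
  IsConjClassIn G tC ∧
    (∃ U : Set (GL (Fin n) E), IsOpen U ∧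
      tC ∩ (C * (N : Set (GL (Fin n) E))) = U ∩ (C * (N : Set (GL (Fin n) E)))) ∧
    C * (N : Set (GL (Fin n) E)) ⊆ closure (tC ∩ (C * (N : Set (GL (Fin n) E))))

/-! ### The Lie algebra of a closed subgroup of `GL n E`

The Lie algebra is the tangent space at the identity, computed via dual numbers: a matrix
`X` is in the Lie algebra iff `1 + ε X` annihilates every polynomial of the vanishing
ideal of the subgroup. -/

/-- The dual-number point `1 + ε X` of the coordinate space of `GL n E`. -/
def dualPt (X : Matrix (Fin n) (Fin n) E) : (Fin n × Fin n) ⊕ Unit → DualNumber E :=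
  Sum.elim
    (fun ij => algebraMap E (DualNumber E) ((1 : Matrix (Fin n) (Fin n) E) ij.1 ij.2) +
      X ij.1 ij.2 • DualNumber.eps)
    fun _ => 1 - X.trace • DualNumber.eps

/-- The Lie algebra of a closed subgroup of `GL n E` (the tangent space at `1`). -/
def lieAlgOf (H : Subgroup (GL (Fin n) E)) : Set (Matrix (Fin n) (Fin n) E) :=
  {X | ∀ p : MvPolynomial ((Fin n × Fin n) ⊕ Unit) E, (∀ g ∈ H, glEval p g = 0) →
    MvPolynomial.eval (dualPt X) (MvPolynomial.map (algebraMap E (DualNumber E)) p) = 0}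

/-- The set `P^infl` of elements `δ` of `P` with `𝔫 ⊆ (id - Ad δ) 𝔭`. -/
def inflSet (P N : Subgroup (GL (Fin n) E)) : Set (GL (Fin n) E) :=
  {δ | δ ∈ P ∧ ∀ X ∈ lieAlgOf N, ∃ Z ∈ lieAlgOf P,
    X = Z - (δ : Matrix (Fin n) (Fin n) E) * Z *
      ((δ⁻¹ : GL (Fin n) E) : Matrix (Fin n) (Fin n) E)}

/-! ### Regular functions and rational characters -/

/-- A function on a subset `S` of `GL n E` is regular if it is locally a quotient of
polynomial functions in the coordinates of `GL n E`. -/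
def IsRegularOnGL (S : Set (GL (Fin n) E)) (f : GL (Fin n) E → E) : Prop :=
  ∀ g ∈ S, ∃ p q : MvPolynomial ((Fin n × Fin n) ⊕ Unit) E, glEval q g ≠ 0 ∧
    ∀ h ∈ S, glEval q h ≠ 0 → f h * glEval q h = glEval p h

/-- A rational character of a (carrier of a) subgroup of `GL n E`: a multiplicative
function given by a polynomial in the coordinates. -/
def IsRatCharOn (S : Set (GL (Fin n) E)) (χ : GL (Fin n) E → E) : Prop :=
  (∃ p : MvPolynomial ((Fin n × Fin n) ⊕ Unit) E, ∀ g ∈ S, χ g = glEval p g) ∧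
    χ 1 = 1 ∧ ∀ g ∈ S, ∀ h ∈ S, χ (g * h) = χ g * χ h

/-- The restriction map `X(G) → X(H)` on rational characters is an isomorphism:
it is injective and surjective. -/
def CharResIso (Gs Hs : Set (GL (Fin n) E)) : Prop :=
  (∀ χ₁ χ₂ : GL (Fin n) E → E, IsRatCharOn Gs χ₁ → IsRatCharOn Gs χ₂ →
    (∀ h ∈ Hs, χ₁ h = χ₂ h) → ∀ g ∈ Gs, χ₁ g = χ₂ g) ∧
  ∀ ω : GL (Fin n) E → E, IsRatCharOn Hs ω →
    ∃ χ : GL (Fin n) E → E, IsRatCharOn Gs χ ∧ ∀ h ∈ Hs, χ h = ω h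

/-! ### Affine space with its Zariski topology -/

instance affZariski {m : ℕ} : TopologicalSpace (Fin m → E) :=
  TopologicalSpace.generateFrom
    {U | ∃ p : MvPolynomial (Fin m) E, U = {x | MvPolynomial.eval x p ≠ 0}}

/-- A regular function on a subset of affine space: locally a quotient of polynomials. -/
def IsRegularOnAff {m : ℕ} (S : Set (Fin m → E)) (f : (Fin m → E) → E) : Prop :=
  ∀ x ∈ S, ∃ p q : MvPolynomial (Fin m) E, MvPolynomial.eval x q ≠ 0 ∧
    ∀ y ∈ S, MvPolynomial.eval y q ≠ 0 → f y * MvPolynomial.eval y q = MvPolynomial.eval y p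

/-- A quasi-affine variety: a locally closed subset of affine space. -/
def IsQuasiAffine {m : ℕ} (V : Set (Fin m → E)) : Prop :=
  ∃ Z U : Set (Fin m → E), IsClosed Z ∧ IsOpen U ∧ V = Z ∩ U

/-! ### Diagonalisable groups (as closed subgroups of a torus) -/

/-- Affine coordinates on the torus `(Eˣ)^k`: the entries and their inverses. -/
def torCoord {k : ℕ} (d : Fin k → Eˣ) : Fin k ⊕ Fin k → E :=
  Sum.elim (fun i => ((d i : Eˣ) : E)) fun i => (((d i)⁻¹ : Eˣ) : E)

def torEval {k : ℕ} (p : MvPolynomial (Fin k ⊕ Fin k) E) (d : Fin k → Eˣ) : E :=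
  MvPolynomial.eval (torCoord d) p

instance torZariski {k : ℕ} : TopologicalSpace (Fin k → Eˣ) :=
  TopologicalSpace.generateFrom
    {U | ∃ p : MvPolynomial (Fin k ⊕ Fin k) E, U = {d | torEval p d ≠ 0}}

/-- A rational character of a closed subgroup `D` of the torus. -/
def IsRatCharTor {k : ℕ} (D : Subgroup (Fin k → Eˣ)) (ω : (Fin k → Eˣ) → E) : Prop :=
  (∃ p : MvPolynomial (Fin k ⊕ Fin k) E, ∀ d ∈ D, ω d = torEval p d) ∧
    ω 1 = 1 ∧ ∀ d ∈ D, ∀ e ∈ D, ω (d * e) = ω d * ω e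

/-- Coordinates of a point of `V × D`. -/
def torActCoord {m k : ℕ} (x : Fin m → E) (d : Fin k → Eˣ) : Fin m ⊕ (Fin k ⊕ Fin k) → E :=
  Sum.elim x (torCoord d)

/-- A regular (right) action of a subgroup `D` of the torus on a subset `V` of affine
space: the action map is regular in the joint coordinates. -/
def IsRegularTorAction {m k : ℕ} (V : Set (Fin m → E)) (D : Subgroup (Fin k → Eˣ))
    (a : (Fin m → E) → (Fin k → Eˣ) → (Fin m → E)) : Prop :=
  (∀ x ∈ V, ∀ d ∈ D, a x d ∈ V) ∧ (∀ x ∈ V, a x 1 = x) ∧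
    (∀ x ∈ V, ∀ d ∈ D, ∀ e ∈ D, a (a x d) e = a x (d * e)) ∧
    ∀ j : Fin m, ∀ x ∈ V, ∀ d ∈ D, ∃ p q : MvPolynomial (Fin m ⊕ (Fin k ⊕ Fin k)) E,
      MvPolynomial.eval (torActCoord x d) q ≠ 0 ∧
      ∀ y ∈ V, ∀ e ∈ D, MvPolynomial.eval (torActCoord y e) q ≠ 0 →
        a y e j * MvPolynomial.eval (torActCoord y e) q = MvPolynomial.eval (torActCoord y e) p

/-- The action is free and separable.  Over an algebraically closed field this is
equivalent to each orbit map being an isomorphism of varieties onto the orbit (orbit maps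
are bijective onto orbits by freeness, birational by separability, and isomorphisms by
Zariski's main theorem, orbits being normal); we use the latter formulation. -/
def IsFreeSeparableTorAction {m k : ℕ} (V : Set (Fin m → E)) (D : Subgroup (Fin k → Eˣ))
    (a : (Fin m → E) → (Fin k → Eˣ) → (Fin m → E)) : Prop :=
  ∀ ξ ∈ V, (∀ d ∈ D, ∀ e ∈ D, a ξ d = a ξ e → d = e) ∧
    ∃ r : (Fin m → E) → (Fin k → Eˣ), (∀ d ∈ D, r (a ξ d) = d) ∧
      ∀ i : Fin k, IsRegularOnAff {y | ∃ d ∈ D, y = a ξ d} (fun y => ((r y i : Eˣ) : E)) ∧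
        IsRegularOnAff {y | ∃ d ∈ D, y = a ξ d} fun y => (((r y i)⁻¹ : Eˣ) : E)

/-! ### Regular actions of linear algebraic groups on quasi-affine varieties -/

/-- Coordinates of a point of `G × V`. -/
def glActCoord {m : ℕ} (g : GL (Fin n) E) (x : Fin m → E) :
    ((Fin n × Fin n) ⊕ Unit) ⊕ Fin m → E :=
  Sum.elim (glCoordFun g) x

/-- A regular action of the subgroup `G` of `GL n E` on the subset `V` of affine space. -/
def IsRegularGLActionOn {m : ℕ} (V : Set (Fin m → E)) (G : Subgroup (GL (Fin n) E))
    (a : GL (Fin n) E → (Fin m → E) → (Fin m → E)) : Prop :=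
  (∀ g ∈ G, ∀ x ∈ V, a g x ∈ V) ∧ (∀ x ∈ V, a 1 x = x) ∧
    (∀ g ∈ G, ∀ h ∈ G, ∀ x ∈ V, a (g * h) x = a g (a h x)) ∧
    ∀ j : Fin m, ∀ g ∈ G, ∀ x ∈ V, ∃ p q : MvPolynomial (((Fin n × Fin n) ⊕ Unit) ⊕ Fin m) E,
      MvPolynomial.eval (glActCoord g x) q ≠ 0 ∧
      ∀ h ∈ G, ∀ y ∈ V, MvPolynomial.eval (glActCoord h y) q ≠ 0 →
        a h y j * MvPolynomial.eval (glActCoord h y) q = MvPolynomial.eval (glActCoord h y) p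

/-- Orbit of a point under a set of group elements. -/
def orbitSet {m : ℕ} (Gs : Set (GL (Fin n) E))
    (a : GL (Fin n) E → (Fin m → E) → (Fin m → E)) (x : Fin m → E) : Set (Fin m → E) :=
  {y | ∃ g ∈ Gs, y = a g x}

/-- Stabiliser (as a set) of a point. -/
def stabSet {m : ℕ} (Gs : Set (GL (Fin n) E))
    (a : GL (Fin n) E → (Fin m → E) → (Fin m → E)) (x : Fin m → E) : Set (GL (Fin n) E) :=
  {g ∈ Gs | a g x = x}

/-- The set of generic points: points whose orbit is dense in `V`. -/
def genPts {m : ℕ} (V : Set (Fin m → E)) (Gs : Set (GL (Fin n) E))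
    (a : GL (Fin n) E → (Fin m → E) → (Fin m → E)) : Set (Fin m → E) :=
  {x ∈ V | V ⊆ closure (orbitSet Gs a x)}

/-- `V` is prehomogeneous: it contains a dense (relatively open) orbit. -/
def IsPrehomOn {m : ℕ} (V : Set (Fin m → E)) (Gs : Set (GL (Fin n) E))
    (a : GL (Fin n) E → (Fin m → E) → (Fin m → E)) : Prop :=
  ∃ ξ ∈ V, V ⊆ closure (orbitSet Gs a ξ) ∧
    ∃ U : Set (Fin m → E), IsOpen U ∧ orbitSet Gs a ξ = U ∩ V


/-! ### Matrix Lie algebra material -/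

/-- The Zariski topology on the space of `n × n` matrices (not registered as an
instance). -/
def matZariskiT : TopologicalSpace (Matrix (Fin n) (Fin n) E) :=
  TopologicalSpace.generateFrom
    {U | ∃ p : MvPolynomial (Fin n × Fin n) E,
      U = {A : Matrix (Fin n) (Fin n) E | MvPolynomial.eval (fun ij => A ij.1 ij.2) p ≠ 0}}

/-- An `sl₂`-triple `(X, H, Y)` inside a Lie subalgebra `g` of matrices. -/
def IsSl2Triple (g : Set (Matrix (Fin n) (Fin n) E)) (X H Y : Matrix (Fin n) (Fin n) E) :
    Prop :=
  X ∈ g ∧ H ∈ g ∧ Y ∈ g ∧ H * X - X * H = (2 : E) • X ∧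
    H * Y - Y * H = (-2 : E) • Y ∧ X * Y - Y * X = H

/-- The eigenspace of `ad H` on `g` with (integer) eigenvalue `k`. -/
def adEig (g : Set (Matrix (Fin n) (Fin n) E)) (Hm : Matrix (Fin n) (Fin n) E) (k : ℤ) :
    Set (Matrix (Fin n) (Fin n) E) :=
  {Z ∈ g | Hm * Z - Z * Hm = ((k : E)) • Z}

/-- `𝔮 = ⊕_{k ≥ 0} 𝔤_k`. -/
def qOf (g : Set (Matrix (Fin n) (Fin n) E)) (Hm : Matrix (Fin n) (Fin n) E) :
    Set (Matrix (Fin n) (Fin n) E) :=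
  (Submodule.span E (⋃ k : ℕ, adEig g Hm (k : ℤ)) : Submodule E (Matrix (Fin n) (Fin n) E))

/-- `𝔲 = ⊕_{k ≥ 2} 𝔤_k`. -/
def uOf (g : Set (Matrix (Fin n) (Fin n) E)) (Hm : Matrix (Fin n) (Fin n) E) :
    Set (Matrix (Fin n) (Fin n) E) :=
  (Submodule.span E (⋃ k : ℕ, adEig g Hm ((k : ℤ) + 2)) :
    Submodule E (Matrix (Fin n) (Fin n) E))

/-- `𝔲' = ⊕_{k > 2} 𝔤_k`. -/
def u'Of (g : Set (Matrix (Fin n) (Fin n) E)) (Hm : Matrix (Fin n) (Fin n) E) :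
    Set (Matrix (Fin n) (Fin n) E) :=
  (Submodule.span E (⋃ k : ℕ, adEig g Hm ((k : ℤ) + 3)) :
    Submodule E (Matrix (Fin n) (Fin n) E))

/-- The exponential of a nilpotent matrix (a finite sum in characteristic zero). -/
def expNil (X : Matrix (Fin n) (Fin n) E) : Matrix (Fin n) (Fin n) E :=
  ∑ k ∈ Finset.range (n + 1), ((k.factorial : E)⁻¹) • X ^ k

/-- `ad A = [A, ·]` as a linear endomorphism of the matrix space. -/
def adM (A : Matrix (Fin n) (Fin n) E) :
    Matrix (Fin n) (Fin n) E →ₗ[E] Matrix (Fin n) (Fin n) E :=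
  LinearMap.mulLeft E A - LinearMap.mulRight E A

/-- Conjugation `Z ↦ l Z l⁻¹` as a linear endomorphism of the matrix space. -/
def conjLin (l : GL (Fin n) E) :
    Matrix (Fin n) (Fin n) E →ₗ[E] Matrix (Fin n) (Fin n) E :=
  (LinearMap.mulLeft E ((l : Matrix (Fin n) (Fin n) E))).comp
    (LinearMap.mulRight E (((l⁻¹ : GL (Fin n) E) : Matrix (Fin n) (Fin n) E)))

/-- Evaluation of a polynomial in the matrix entries. -/
def matEval (p : MvPolynomial (Fin n × Fin n) E) (A : Matrix (Fin n) (Fin n) E) : E :=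
  MvPolynomial.eval (fun ij => A ij.1 ij.2) p

/-- Directional derivative `∂_B p (A)` of a polynomial function of a matrix. -/
def dirDeriv (p : MvPolynomial (Fin n × Fin n) E) (A B : Matrix (Fin n) (Fin n) E) : E :=
  ∑ ij : Fin n × Fin n, B ij.1 ij.2 * matEval (MvPolynomial.pderiv ij p) A



/-! ### Auxiliary material for Statement 13 -/

section Statement13Aux

variable {E : Type*} [Field E] {n : ℕ}

/-- Evaluation of polynomials as a linear map into functions on `GL n E`. -/
private def glEvalL : MvPolynomial ((Fin n × Fin n) ⊕ Unit) E →ₗ[E] (GL (Fin n) E → E) where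
  toFun w := fun x => glEval w x
  map_add' u v := by funext x; simp [glEval]
  map_smul' c u := by funext x; simp [glEval, MvPolynomial.smul_eq_C_mul]

private lemma eval_bind₁' {σ τ : Type*} (f : τ → E) (gp : σ → MvPolynomial τ E)
    (φ : MvPolynomial σ E) :
    MvPolynomial.eval f (MvPolynomial.bind₁ gp φ) =
      MvPolynomial.eval (fun i => MvPolynomial.eval f (gp i)) φ :=
  MvPolynomial.eval₂Hom_bind₁ (RingHom.id E) f gp φ

private lemma det_isUnit (x : GL (Fin n) E) : IsUnit (x : Matrix (Fin n) (Fin n) E).det :=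
  x.isUnit.map Matrix.detMonoidHom

/-- Substitution realising left translation: `glEval (lsubVar z ∘b w) x = glEval w (z * x)`. -/
private def lsubVar (z : GL (Fin n) E) :
    (Fin n × Fin n) ⊕ Unit → MvPolynomial ((Fin n × Fin n) ⊕ Unit) E
  | Sum.inl ij => ∑ k : Fin n,
      MvPolynomial.C ((z : Matrix (Fin n) (Fin n) E) ij.1 k) * MvPolynomial.X (Sum.inl (k, ij.2))
  | Sum.inr _ => MvPolynomial.C (Ring.inverse (z : Matrix (Fin n) (Fin n) E).det) *
      MvPolynomial.X (Sum.inr ())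

private lemma glEval_lsub (z : GL (Fin n) E) (w : MvPolynomial ((Fin n × Fin n) ⊕ Unit) E)
    (x : GL (Fin n) E) :
    glEval (MvPolynomial.bind₁ (lsubVar z) w) x = glEval w (z * x) := by
  rw [glEval, glEval, eval_bind₁']
  have hcoord : (fun i => MvPolynomial.eval (glCoordFun x) (lsubVar z i)) = glCoordFun (z * x) := by
    funext i
    cases i with
    | inl ij =>
      simp only [lsubVar, _root_.map_sum, _root_.map_mul, MvPolynomial.eval_C, MvPolynomial.eval_X]
      simp [glCoordFun, Units.val_mul, Matrix.mul_apply]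
    | inr u =>
      simp only [lsubVar, _root_.map_mul, MvPolynomial.eval_C, MvPolynomial.eval_X]
      simp [glCoordFun, Units.val_mul, Matrix.det_mul, Ring.mul_inverse_rev, mul_comm]
  rw [hcoord]

/-- Substitution realising multiplication (comultiplication on coordinates). -/
private def mulVar (n : ℕ) (E : Type*) [Field E] :
    (Fin n × Fin n) ⊕ Unit →
      MvPolynomial (((Fin n × Fin n) ⊕ Unit) ⊕ ((Fin n × Fin n) ⊕ Unit)) E
  | Sum.inl ij => ∑ k : Fin n,
      MvPolynomial.X (Sum.inl (Sum.inl (ij.1, k))) * MvPolynomial.X (Sum.inr (Sum.inl (k, ij.2)))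
  | Sum.inr _ => MvPolynomial.X (Sum.inl (Sum.inr ())) * MvPolynomial.X (Sum.inr (Sum.inr ()))

private lemma glEval_mulVar (w : MvPolynomial ((Fin n × Fin n) ⊕ Unit) E) (x y : GL (Fin n) E) :
    glEval w (x * y) =
      MvPolynomial.eval (Sum.elim (glCoordFun x) (glCoordFun y))
        (MvPolynomial.bind₁ (mulVar n E) w) := by
  rw [glEval, eval_bind₁']
  have hcoord : glCoordFun (x * y) =
      (fun i => MvPolynomial.eval (Sum.elim (glCoordFun x) (glCoordFun y)) (mulVar n E i)) := by
    funext i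
    cases i with
    | inl ij =>
      simp only [mulVar, _root_.map_sum, _root_.map_mul, MvPolynomial.eval_X]
      simp [glCoordFun, Units.val_mul, Matrix.mul_apply]
    | inr u =>
      simp only [mulVar, _root_.map_mul, MvPolynomial.eval_X]
      simp [glCoordFun, Units.val_mul, Matrix.det_mul, Ring.mul_inverse_rev, mul_comm]
  rw [hcoord]

/-- Splitting of a regular function of a product into a finite sum of products
(finiteness of the comultiplication). -/
private lemma exists_split (p : MvPolynomial ((Fin n × Fin n) ⊕ Unit) E) :
    ∃ (s : Finset ((((Fin n × Fin n) ⊕ Unit) ⊕ ((Fin n × Fin n) ⊕ Unit)) →₀ ℕ))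
      (a b : ((((Fin n × Fin n) ⊕ Unit) ⊕ ((Fin n × Fin n) ⊕ Unit)) →₀ ℕ) →
        MvPolynomial ((Fin n × Fin n) ⊕ Unit) E),
      ∀ x y : GL (Fin n) E, glEval p (x * y) = ∑ m ∈ s, glEval (a m) x * glEval (b m) y := by
  classical
  set P := MvPolynomial.bind₁ (mulVar n E) p with hP
  refine ⟨P.support,
    fun m => MvPolynomial.monomial (m.comapDomain Sum.inl Sum.inl_injective.injOn)
      (MvPolynomial.coeff m P),
    fun m => MvPolynomial.monomial (m.comapDomain Sum.inr Sum.inr_injective.injOn) 1, ?_⟩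
  intro x y
  rw [glEval_mulVar, ← hP]
  conv_lhs => rw [← MvPolynomial.support_sum_monomial_coeff P]
  rw [_root_.map_sum]
  refine Finset.sum_congr rfl fun m _ => ?_
  rw [glEval, glEval, MvPolynomial.eval_monomial, MvPolynomial.eval_monomial,
    MvPolynomial.eval_monomial]
  rw [Finsupp.prod_fintype _ _ (fun i => pow_zero _),
    Finsupp.prod_fintype _ _ (fun i => pow_zero _),
    Finsupp.prod_fintype _ _ (fun i => pow_zero _),
    Fintype.prod_sum_type]
  simp only [Finsupp.comapDomain_apply, Sum.elim_inl, Sum.elim_inr, one_mul]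
  ring

/-- For a linearly independent family of functions, there are points making the evaluation
matrix invertible. -/
private lemma exists_points {X : Type*} {ι : Type*} [Fintype ι] [DecidableEq ι]
    (v : ι → (X → E)) (hv : LinearIndependent E v) :
    ∃ z : ι → X, (Matrix.of fun a b => v b (z a)).det ≠ 0 := by
  classical
  set Φ : X → (ι → E) := fun x b => v b x with hΦ
  have hspan : Submodule.span E (Set.range Φ) = ⊤ := by
    by_contra hne
    obtain ⟨φ, hφ0, hker⟩ :=
      Submodule.exists_dual_map_eq_bot_of_lt_top (lt_top_iff_ne_top.mpr hne) inferInstance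
    have hvan : ∀ x : X, φ (Φ x) = 0 := by
      intro x
      have hmem : φ (Φ x) ∈ (Submodule.span E (Set.range Φ)).map φ :=
        Submodule.mem_map_of_mem (Submodule.subset_span ⟨x, rfl⟩)
      rw [hker, Submodule.mem_bot] at hmem
      exact hmem
    set c : ι → E := fun b => φ (Pi.single b 1) with hc
    have hφu : ∀ u : ι → E, φ u = ∑ b, u b * c b := by
      intro u
      conv_lhs => rw [← (Pi.basisFun E ι).sum_repr u]
      rw [map_sum]
      refine Finset.sum_congr rfl fun b _ => ?_
      rw [_root_.map_smul, Pi.basisFun_repr, Pi.basisFun_apply, smul_eq_mul, hc]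
    have hsum : ∑ b, c b • v b = 0 := by
      funext x
      have := hvan x
      rw [hφu] at this
      simpa [Finset.sum_apply, mul_comm] using this
    have hc0 : ∀ b, c b = 0 := Fintype.linearIndependent_iff.mp hv c hsum
    refine hφ0 ?_
    refine (Pi.basisFun E ι).ext fun b => ?_
    rw [Pi.basisFun_apply]
    simpa using hc0 b
  obtain ⟨bset, hsub, hspan2, hind⟩ := exists_linearIndependent E (Set.range Φ)
  rw [hspan] at hspan2
  haveI : Fintype bset := (hind.setFinite).fintype
  let B : Module.Basis bset E (ι → E) :=
    Module.Basis.mk hind (by rw [Subtype.range_coe, hspan2])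
  let e : bset ≃ ι := B.indexEquiv (Pi.basisFun E ι)
  let B' : Module.Basis ι E (ι → E) := B.reindex e
  have hzex : ∀ a : ι, ∃ x : X, Φ x = ((e.symm a : bset) : ι → E) := fun a => hsub (e.symm a).2
  choose z hzval using hzex
  refine ⟨z, ?_⟩
  have hMx : (Matrix.of fun a b => v b (z a))ᵀ = (Pi.basisFun E ι).toMatrix B' := by
    ext i j
    rw [Matrix.transpose_apply, Matrix.of_apply, Module.Basis.toMatrix_apply, Pi.basisFun_repr]
    have : B' j = Φ (z j) := by
      rw [Module.Basis.reindex_apply, Module.Basis.mk_apply, ← hzval j]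
    rw [this]
  haveI : Invertible ((Pi.basisFun E ι).toMatrix B') :=
    (Pi.basisFun E ι).invertibleToMatrix B'
  have hunit : IsUnit ((Pi.basisFun E ι).toMatrix B').det :=
    Matrix.isUnit_iff_isUnit_det _ |>.mp (isUnit_of_invertible _)
  have := hunit.ne_zero
  rw [← hMx, Matrix.det_transpose] at this
  exact this

/-- Right translation of functions on `GL n E`, as a linear map. -/
private def rT (h : GL (Fin n) E) : (GL (Fin n) E → E) →ₗ[E] (GL (Fin n) E → E) where
  toFun f := fun x => f (x * h)
  map_add' u v := rfl
  map_smul' c u := rfl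

/-- Functions vanishing on a subgroup `H`, as a submodule of all functions. -/
private def vanH (H : Subgroup (GL (Fin n) E)) : Submodule E (GL (Fin n) E → E) where
  carrier := {f | ∀ h ∈ H, f h = 0}
  add_mem' := fun hf hg h hh => by
    simp only [Pi.add_apply, hf h hh, hg h hh, add_zero]
  zero_mem' := fun h hh => rfl
  smul_mem' := fun c f hf h hh => by
    simp only [Pi.smul_apply, hf h hh, smul_eq_mul, mul_zero]

end Statement13Aux


/-- For a closed subgroup `H` of a connected linear algebraic group
`G`, acting on `G` by right translations, every `g ∈ G` has an `H`-invariant open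
neighbourhood `U` in `G` with `𝒪_ω(U) ≠ 0`, for every rational character `ω` of `H`. -/
theorem subgroup_local_eigenfunctions
    {E : Type*} [Field E] [IsAlgClosed E] {n : ℕ}
    (G H : Subgroup (GL (Fin n) E)) (hG : IsConnectedLinearAlgGrp G)
    (hHG : H ≤ G) (hH : IsClosedSubgroup H)
    (ω : GL (Fin n) E → E) (hω : IsRatCharOn (H : Set (GL (Fin n) E)) ω)
    (g : GL (Fin n) E) (hg : g ∈ G) :
    ∃ U : Set (GL (Fin n) E), g ∈ U ∧ U ⊆ (G : Set (GL (Fin n) E)) ∧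
      (∃ W, IsOpen W ∧ U = W ∩ (G : Set (GL (Fin n) E))) ∧
      (∀ x ∈ U, ∀ h ∈ H, x * h ∈ U) ∧
      ∃ f : GL (Fin n) E → E, IsRegularOnGL U f ∧
        (∀ x ∈ U, ∀ h ∈ H, f (x * h) = ω h * f x) ∧ ∃ x ∈ U, f x ≠ 0 := by
  classical
  obtain ⟨⟨p₀, hp₀⟩, hω1, hωmul⟩ := hω
  -- the regular function extending `ω`
  set p₀f : GL (Fin n) E → E := fun x => glEval p₀ x with hp₀f_def
  have hp₀f1 : p₀f 1 = 1 := by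
    have h1 := hp₀ 1 H.one_mem
    show glEval p₀ 1 = 1
    rw [← h1, hω1]
  obtain ⟨s, aP, bP, hsplit⟩ := exists_split (E := E) (n := n) p₀
  -- the space spanned by the right `H`-translates of `p₀f`
  set gen : H → (GL (Fin n) E → E) := fun h => rT (h : GL (Fin n) E) p₀f with hgen_def
  set Wsp : Submodule E (GL (Fin n) E → E) := Submodule.span E (Set.range gen) with hWsp_def
  have hgen_mem : ∀ h : H, gen h ∈ Wsp := fun h => Submodule.subset_span ⟨h, rfl⟩
  have hgen1 : gen 1 = p₀f := by
    funext x
    simp [hgen_def, rT]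
  have hp₀f_mem : p₀f ∈ Wsp := hgen1 ▸ hgen_mem 1
  have hgen_eq : ∀ h : H,
      gen h = ∑ m ∈ s, glEval (bP m) (h : GL (Fin n) E) • (glEvalL (aP m) : GL (Fin n) E → E) := by
    intro h
    funext x
    simp only [Finset.sum_apply, Pi.smul_apply, smul_eq_mul, hgen_def]
    show glEval p₀ (x * (h : GL (Fin n) E)) = _
    rw [hsplit x (h : GL (Fin n) E)]
    refine Finset.sum_congr rfl fun m _ => ?_
    rw [mul_comm]
    rfl
  -- finite dimensionality
  have hWle : Wsp ≤ Submodule.span E ((fun m => (glEvalL (aP m) : GL (Fin n) E → E)) '' s) := by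
    rw [hWsp_def, Submodule.span_le]
    rintro _ ⟨h, rfl⟩
    rw [hgen_eq h]
    exact Submodule.sum_mem _ fun m hm => Submodule.smul_mem _ _
      (Submodule.subset_span (Set.mem_image_of_mem _ hm))
  haveI : FiniteDimensional E
      (Submodule.span E ((fun m => (glEvalL (aP m) : GL (Fin n) E → E)) '' s)) :=
    FiniteDimensional.span_of_finite E ((s.finite_toSet).image _)
  haveI : FiniteDimensional E Wsp := Submodule.finiteDimensional_of_le hWle
  -- every element of `Wsp` is a polynomial function
  have hWpoly : Wsp ≤ LinearMap.range glEvalL := by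
    rw [hWsp_def, Submodule.span_le]
    rintro _ ⟨h, rfl⟩
    refine ⟨∑ m ∈ s, glEval (bP m) (h : GL (Fin n) E) • aP m, ?_⟩
    rw [_root_.map_sum, hgen_eq h]
    refine Finset.sum_congr rfl fun m _ => ?_
    rw [_root_.map_smul]
  -- stability under right translation by `H`
  have hWstab : ∀ (h : H) (f : GL (Fin n) E → E), f ∈ Wsp → rT (h : GL (Fin n) E) f ∈ Wsp := by
    intro h f hf
    have hmap : Wsp.map (rT (h : GL (Fin n) E)) ≤ Wsp := by
      rw [hWsp_def, Submodule.map_span, Submodule.span_le]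
      rintro _ ⟨_, ⟨h', rfl⟩, rfl⟩
      have : rT (h : GL (Fin n) E) (gen h') = gen (h * h') := by
        funext x
        simp [hgen_def, rT, mul_assoc]
      rw [this]
      exact hgen_mem (h * h')
    exact hmap ⟨f, hf, rfl⟩
  have hVstab : ∀ (h : H) (f : GL (Fin n) E → E), f ∈ vanH H → rT (h : GL (Fin n) E) f ∈ vanH H := by
    intro h f hf y hy
    exact hf _ (H.mul_mem hy h.2)
  set Msp : Submodule E (GL (Fin n) E → E) := Wsp ⊓ vanH H with hMsp_def
  haveI : FiniteDimensional E Msp := Submodule.finiteDimensional_of_le inf_le_left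
  have hMstab : ∀ (h : H) (f : GL (Fin n) E → E), f ∈ Msp → rT (h : GL (Fin n) E) f ∈ Msp := by
    intro h f hf
    exact ⟨hWstab h f hf.1, hVstab h f hf.2⟩
  set d : ℕ := Module.finrank E Msp with hd_def
  set mb : Module.Basis (Fin d) E Msp := Module.finBasis E Msp with hmb_def
  set mf : Fin d → (GL (Fin n) E → E) := fun b => (mb b : GL (Fin n) E → E) with hmf_def
  have hmf_mem : ∀ b, mf b ∈ Msp := fun b => (mb b).2
  have hmind : LinearIndependent E mf :=
    mb.linearIndependent.map' Msp.subtype (Submodule.ker_subtype _)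
  -- the matrices of right translation on `Msp`
  set ψ : H → (Msp →ₗ[E] Msp) :=
    fun h => (rT (h : GL (Fin n) E)).restrict (fun v hv => hMstab h v hv) with hψ_def
  set Cm : H → Matrix (Fin d) (Fin d) E := fun h => LinearMap.toMatrix mb mb (ψ h) with hCm_def
  have hψmul : ∀ h h' : H, ψ (h * h') = (ψ h).comp (ψ h') := by
    intro h h'
    refine LinearMap.ext fun v => Subtype.ext ?_
    rw [LinearMap.comp_apply, hψ_def]
    simp only [LinearMap.restrict_coe_apply]
    funext x
    show (v : GL (Fin n) E → E) (x * ((h * h' : H) : GL (Fin n) E)) =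
      (v : GL (Fin n) E → E) (x * (h : GL (Fin n) E) * (h' : GL (Fin n) E))
    rw [show ((h * h' : H) : GL (Fin n) E) = (h : GL (Fin n) E) * (h' : GL (Fin n) E) from rfl,
      mul_assoc]
  have hCmul : ∀ h h' : H, Cm (h * h') = Cm h * Cm h' := by
    intro h h'
    rw [hCm_def]
    simp only
    rw [hψmul, LinearMap.toMatrix_comp mb mb mb]
  have hC1 : Cm 1 = 1 := by
    have hψ1 : ψ 1 = LinearMap.id := by
      refine LinearMap.ext fun v => Subtype.ext ?_
      rw [hψ_def]
      simp only [LinearMap.restrict_coe_apply, LinearMap.id_coe, id_eq]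
      funext x
      show (v : GL (Fin n) E → E) (x * ((1 : H) : GL (Fin n) E)) = (v : GL (Fin n) E → E) x
      rw [OneMemClass.coe_one, mul_one]
    rw [hCm_def]
    simp only
    rw [hψ1, LinearMap.toMatrix_id]
  have hdetC : ∀ h : H, (Cm h).det ≠ 0 := by
    intro h
    have hone : (Cm h).det * (Cm h⁻¹).det = 1 := by
      rw [← Matrix.det_mul, ← hCmul, mul_inv_cancel, hC1, Matrix.det_one]
    exact left_ne_zero_of_mul_eq_one hone
  have hCexp : ∀ (h : H) (b : Fin d),
      rT (h : GL (Fin n) E) (mf b) = ∑ c, Cm h c b • mf c := by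
    intro h b
    have h1 : ψ h (mb b) = ∑ c, Cm h c b • mb c := by
      conv_lhs => rw [← mb.sum_repr (ψ h (mb b))]
      refine Finset.sum_congr rfl fun c _ => ?_
      rw [hCm_def]
      simp only
      rw [LinearMap.toMatrix_apply]
    have h2 := congrArg (fun v : Msp => (v : GL (Fin n) E → E)) h1
    rw [hψ_def] at h2
    simp only [LinearMap.restrict_coe_apply] at h2
    rw [hmf_def]
    simp only
    rw [h2]
    push_cast
    rfl
  -- the element measuring the failure of `p₀f` to be an eigenvector
  have hdmem : ∀ h : H, rT (h : GL (Fin n) E) p₀f - ω (h : GL (Fin n) E) • p₀f ∈ Msp := by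
    intro h
    constructor
    · exact Submodule.sub_mem _ (hgen_mem h) (Submodule.smul_mem _ _ hp₀f_mem)
    · intro y hy
      have hyh : y * (h : GL (Fin n) E) ∈ H := H.mul_mem hy h.2
      show glEval p₀ (y * (h : GL (Fin n) E)) - ω (h : GL (Fin n) E) * glEval p₀ y = 0
      rw [← hp₀ _ hyh, ← hp₀ _ hy, hωmul y hy _ h.2]
      ring
  set dElt : H → Msp := fun h => ⟨_, hdmem h⟩ with hdElt_def
  -- the extended family
  set wf : (Fin d) ⊕ Unit → (GL (Fin n) E → E) := Sum.elim mf (fun _ => p₀f) with hwf_def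
  have hp₀f_ne : p₀f ≠ 0 := by
    intro hcontra
    have := congrFun hcontra 1
    rw [hp₀f1] at this
    exact one_ne_zero this
  have hwind : LinearIndependent E wf := by
    refine LinearIndependent.sum_type hmind (linearIndependent_unique_iff.mpr hp₀f_ne) ?_
    rw [Submodule.disjoint_def]
    intro f hf1 hf2
    have hfM : f ∈ Msp := by
      have : Submodule.span E (Set.range mf) ≤ Msp := by
        rw [Submodule.span_le]
        rintro _ ⟨b, rfl⟩
        exact hmf_mem b
      exact this hf1
    have hval : f 1 = 0 := hfM.2 1 H.one_mem
    rw [Set.range_const, Submodule.mem_span_singleton] at hf2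
    obtain ⟨c, rfl⟩ := hf2
    have : c * p₀f 1 = 0 := hval
    rw [hp₀f1, mul_one] at this
    rw [this, zero_smul]
  set Um : H → Matrix ((Fin d) ⊕ Unit) ((Fin d) ⊕ Unit) E := fun h =>
    Matrix.fromBlocks (Cm h) (Matrix.of fun c (_ : Unit) => mb.repr (dElt h) c) 0
      (Matrix.of fun _ _ => ω (h : GL (Fin n) E)) with hUm_def
  have hUexp : ∀ (h : H) (b : (Fin d) ⊕ Unit),
      rT (h : GL (Fin n) E) (wf b) = ∑ c, Um h c b • wf c := by
    intro h b
    rw [Fintype.sum_sum_type]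
    cases b with
    | inl b₀ =>
      simp only [hUm_def, hwf_def, Matrix.fromBlocks_apply₁₁, Matrix.fromBlocks_apply₂₁,
        Sum.elim_inl, Sum.elim_inr, Matrix.zero_apply, zero_smul, Finset.sum_const_zero,
        add_zero]
      exact hCexp h b₀
    | inr u =>
      simp only [hUm_def, hwf_def, Matrix.fromBlocks_apply₁₂, Matrix.fromBlocks_apply₂₂,
        Sum.elim_inl, Sum.elim_inr, Matrix.of_apply, Finset.univ_unique, Finset.sum_singleton]
      have hds : ((∑ c, mb.repr (dElt h) c • mb c : Msp) : GL (Fin n) E → E) =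
          ∑ c, mb.repr (dElt h) c • mf c := by
        push_cast
        rfl
      have hsum := mb.sum_repr (dElt h)
      have h3 := congrArg (fun v : Msp => (v : GL (Fin n) E → E)) hsum
      rw [hds] at h3
      rw [h3]
      show _ = (rT (h : GL (Fin n) E) p₀f - ω (h : GL (Fin n) E) • p₀f) + _
      abel
  have hdetU : ∀ h : H, (Um h).det = (Cm h).det * ω (h : GL (Fin n) E) := by
    intro h
    rw [hUm_def]
    simp only
    rw [Matrix.det_fromBlocks_zero₂₁]
    congr 1
    rw [Matrix.det_unique]
    rfl
  -- choose evaluation points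
  obtain ⟨z, hz⟩ := exists_points mf hmind
  obtain ⟨z', hz'⟩ := exists_points wf hwind
  -- choose polynomial representatives
  have hmp_ex : ∀ b : Fin d, ∃ w, (glEvalL w : GL (Fin n) E → E) = mf b :=
    fun b => hWpoly (hmf_mem b).1
  choose mp hmp using hmp_ex
  set wp : (Fin d) ⊕ Unit → MvPolynomial ((Fin n × Fin n) ⊕ Unit) E :=
    Sum.elim mp (fun _ => p₀) with hwp_def
  have hwp : ∀ b, (glEvalL (wp b) : GL (Fin n) E → E) = wf b := by
    intro b
    cases b with
    | inl b₀ => exact hmp b₀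
    | inr u => rfl
  -- the two semi-invariant polynomials
  set Qpoly : MvPolynomial ((Fin n × Fin n) ⊕ Unit) E :=
    (Matrix.of fun (a b : Fin d) => MvPolynomial.bind₁ (lsubVar (z a * g⁻¹)) (mp b)).det
    with hQpoly_def
  set Ppoly : MvPolynomial ((Fin n × Fin n) ⊕ Unit) E :=
    (Matrix.of fun (a b : (Fin d) ⊕ Unit) => MvPolynomial.bind₁ (lsubVar (z' a * g⁻¹)) (wp b)).det
    with hPpoly_def
  have hQval : ∀ x : GL (Fin n) E,
      glEval Qpoly x = (Matrix.of fun a b => mf b (z a * g⁻¹ * x)).det := by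
    intro x
    rw [hQpoly_def, glEval, RingHom.map_det]
    congr 1
    ext a b
    rw [RingHom.mapMatrix_apply, Matrix.map_apply, Matrix.of_apply, Matrix.of_apply]
    show glEval (MvPolynomial.bind₁ (lsubVar (z a * g⁻¹)) (mp b)) x = _
    rw [glEval_lsub]
    have := congrFun (hmp b) (z a * g⁻¹ * x)
    rw [← this, mul_assoc]
    rfl
  have hPval : ∀ x : GL (Fin n) E,
      glEval Ppoly x = (Matrix.of fun a b => wf b (z' a * g⁻¹ * x)).det := by
    intro x
    rw [hPpoly_def, glEval, RingHom.map_det]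
    congr 1
    ext a b
    rw [RingHom.mapMatrix_apply, Matrix.map_apply, Matrix.of_apply, Matrix.of_apply]
    show glEval (MvPolynomial.bind₁ (lsubVar (z' a * g⁻¹)) (wp b)) x = _
    rw [glEval_lsub]
    have := congrFun (hwp b) (z' a * g⁻¹ * x)
    rw [← this, mul_assoc]
    rfl
  -- transformation rules
  have hQmul : ∀ (x : GL (Fin n) E) (h : H),
      glEval Qpoly (x * (h : GL (Fin n) E)) = glEval Qpoly x * (Cm h).det := by
    intro x h
    rw [hQval, hQval, ← Matrix.det_mul]
    congr 1
    ext a b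
    rw [Matrix.mul_apply, Matrix.of_apply]
    have e1 : z a * g⁻¹ * (x * (h : GL (Fin n) E)) = (z a * g⁻¹ * x) * (h : GL (Fin n) E) := by
      simp only [mul_assoc]
    rw [e1]
    have h4 := congrFun (hCexp h b) (z a * g⁻¹ * x)
    simp only [Finset.sum_apply, Pi.smul_apply, smul_eq_mul] at h4
    rw [show (rT (h : GL (Fin n) E) (mf b)) (z a * g⁻¹ * x) =
      mf b (z a * g⁻¹ * x * (h : GL (Fin n) E)) from rfl] at h4
    rw [h4]
    refine Finset.sum_congr rfl fun c _ => ?_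
    rw [Matrix.of_apply, mul_comm]
  have hPmul : ∀ (x : GL (Fin n) E) (h : H),
      glEval Ppoly (x * (h : GL (Fin n) E)) = glEval Ppoly x * ((Cm h).det * ω (h : GL (Fin n) E)) := by
    intro x h
    rw [hPval, hPval, ← hdetU, ← Matrix.det_mul]
    congr 1
    ext a b
    rw [Matrix.mul_apply, Matrix.of_apply]
    have e1 : z' a * g⁻¹ * (x * (h : GL (Fin n) E)) = (z' a * g⁻¹ * x) * (h : GL (Fin n) E) := by
      simp only [mul_assoc]
    rw [e1]
    have h4 := congrFun (hUexp h b) (z' a * g⁻¹ * x)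
    simp only [Finset.sum_apply, Pi.smul_apply, smul_eq_mul] at h4
    rw [show (rT (h : GL (Fin n) E) (wf b)) (z' a * g⁻¹ * x) =
      wf b (z' a * g⁻¹ * x * (h : GL (Fin n) E)) from rfl] at h4
    rw [h4]
    refine Finset.sum_congr rfl fun c _ => ?_
    rw [Matrix.of_apply, mul_comm]
  -- values at `g`
  have hQg : glEval Qpoly g ≠ 0 := by
    rw [hQval]
    have : (Matrix.of fun a b => mf b (z a * g⁻¹ * g)) = (Matrix.of fun a b => mf b (z a)) := by
      ext a b
      rw [Matrix.of_apply, Matrix.of_apply, inv_mul_cancel_right]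
    rw [this]
    exact hz
  have hPg : glEval Ppoly g ≠ 0 := by
    rw [hPval]
    have : (Matrix.of fun a b => wf b (z' a * g⁻¹ * g)) = (Matrix.of fun a b => wf b (z' a)) := by
      ext a b
      rw [Matrix.of_apply, Matrix.of_apply, inv_mul_cancel_right]
    rw [this]
    exact hz'
  -- assemble the data
  refine ⟨{x | glEval Qpoly x ≠ 0} ∩ (G : Set (GL (Fin n) E)), ⟨hQg, hg⟩,
    Set.inter_subset_right, ⟨{x | glEval Qpoly x ≠ 0}, ?_, rfl⟩, ?_,
    fun x => glEval Ppoly x / glEval Qpoly x, ?_, ?_, g, ⟨hQg, hg⟩, ?_⟩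
  · exact TopologicalSpace.isOpen_generateFrom_of_mem ⟨Qpoly, rfl⟩
  · rintro x ⟨hxq, hxG⟩ h hh
    refine ⟨?_, G.mul_mem hxG (hHG hh)⟩
    show glEval Qpoly (x * h) ≠ 0
    rw [show x * h = x * ((⟨h, hh⟩ : H) : GL (Fin n) E) from rfl, hQmul x ⟨h, hh⟩]
    exact mul_ne_zero hxq (hdetC ⟨h, hh⟩)
  · rintro x ⟨hxq, hxG⟩
    exact ⟨Ppoly, Qpoly, hxq, fun y _ hqy => div_mul_cancel₀ _ hqy⟩
  · rintro x ⟨hxq, hxG⟩ h hh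
    show glEval Ppoly (x * h) / glEval Qpoly (x * h) = ω h * (glEval Ppoly x / glEval Qpoly x)
    rw [show x * h = x * ((⟨h, hh⟩ : H) : GL (Fin n) E) from rfl, hQmul x ⟨h, hh⟩,
      hPmul x ⟨h, hh⟩, show ω (((⟨h, hh⟩ : H) : GL (Fin n) E)) = ω h from rfl]
    have hD := hdetC ⟨h, hh⟩
    have hQx : glEval Qpoly x ≠ 0 := hxq
    field_simp
  · exact div_ne_zero hPg hQg


end AlgGrp
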